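/- Let p ∈ ℤ[X] be a monic irreducible polynomial, let A_α = {α = α_1, …, α_n} be the set of its roots in a splitting field F of p over ℚ, and let O_F be the ring of integers of F. Then S_α = Int_ℚ(A_α, O_F) = {f ∈ ℚ[X] : f(α_i) ∈ O_F for all i = 1, …, n}. In particular, for conjugate algebraic integers α and α′ one has S_α = S_{α′}. -/
import Mathlib


/-- Let `p ∈ ℤ[X]` be a monic irreducible polynomial, let
`A_α = {α = α₁, …, αₙ}` be the set of its roots in a splitting field `F` of `p` over `ℚ`,
and let `O_F` be the ring of integers of `F`.  Then `S_α = Int_ℚ(A_α, O_F)`: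
a polynomial `f ∈ ℚ[X]` satisfies `f(α) ∈ O_{ℚ(α)}` (i.e. `f(α)` is integral over `ℤ`)
if and only if `f(β) ∈ O_F` for every root `β` of `p` in `F`.  In particular, for conjugate
roots `α, α'` of `p` one has `S_α = S_{α'}`. -/
theorem stmt_18 (p : Polynomial ℤ) (hmonic : p.Monic) (hirr : Irreducible p)
    (F : Type*) [Field F] [Algebra ℚ F]
    [Polynomial.IsSplittingField ℚ F (p.map (algebraMap ℤ ℚ))]
    (α : F) (hα : Polynomial.aeval α p = 0) :
    {f : Polynomial ℚ | IsIntegral ℤ (Polynomial.aeval α f)} =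
      {f : Polynomial ℚ | ∀ β : F, Polynomial.aeval β p = 0 →
        IsIntegral ℤ (Polynomial.aeval β f)} ∧
    ∀ α' : F, Polynomial.aeval α' p = 0 →
      {f : Polynomial ℚ | IsIntegral ℤ (Polynomial.aeval α f)} =
        {f : Polynomial ℚ | IsIntegral ℤ (Polynomial.aeval α' f)} := by
  set q := p.map (algebraMap ℤ ℚ) with hq
  have hqmonic : q.Monic := hmonic.map _
  have hqirr : Irreducible q :=
    (hmonic.irreducible_iff_irreducible_map_fraction_map).mp hirr
  have hnormal : Normal ℚ F := Normal.of_isSplittingField q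
  have key : ∀ x y : F, Polynomial.aeval x p = 0 → Polynomial.aeval y p = 0 →
      ∀ f : Polynomial ℚ, IsIntegral ℤ (Polynomial.aeval x f) →
        IsIntegral ℤ (Polynomial.aeval y f) := by
    intro x y hx hy f hf
    have hxq : Polynomial.aeval x q = 0 := by
      rwa [hq, Polynomial.aeval_map_algebraMap]
    have hyq : Polynomial.aeval y q = 0 := by
      rwa [hq, Polynomial.aeval_map_algebraMap]
    have hmin : minpoly ℚ x = q :=
      (minpoly.eq_of_irreducible_of_monic hqirr hxq hqmonic).symm
    obtain ⟨σ, hσ⟩ := minpoly.exists_algEquiv_of_root (K := ℚ)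
      (x := y) (y := x) ⟨q, hqmonic.ne_zero, hxq⟩ (by rw [hmin]; exact hyq)
    have h2 : Polynomial.aeval (σ y) f = σ (Polynomial.aeval y f) := by
      rw [Polynomial.aeval_algEquiv]; rfl
    have : Polynomial.aeval y f = σ.symm (Polynomial.aeval x f) := by
      rw [← hσ, h2, AlgEquiv.symm_apply_apply]
    rw [this]
    exact hf.map (σ.symm.toRingEquiv.toRingHom.toIntAlgHom)
  constructor
  · ext f
    simp only [Set.mem_setOf_eq]
    exact ⟨fun hf β hβ => key α β hα hβ f hf, fun h => h α hα⟩
  · intro α' hα'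
    ext f
    simp only [Set.mem_setOf_eq]
    exact ⟨key α α' hα hα' f, key α' α hα' hα f⟩
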